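/- Let F ∈ H_Z with p₂(F) ∈ L^∞(𝕋), and let C_F : L²(𝕋) → H_Z be the bounded operator with C_F(α) = π_Z(α)F. Then the following are equivalent: (i) M̃(F) = F; (ii) C_F S₀ = Ũ C_F as operators from L²(𝕋) to H_Z. -/

import Mathlib

open MeasureTheory Complex Real Filter Topology

noncomputable section

/-- The normalized Haar measure `μ` of the circle `𝕋`, realized on the fundamental
domain `(0, 2π]` of `ℝ` via the identification `z = e^{-iω}`. -/
def muT : Measure ℝ := (ENNReal.ofReal (2 * π))⁻¹ • (volume.restrict (Set.Ioc 0 (2 * π)))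

/-- The measure on `𝕋 × [0,1]` underlying the Hilbert space `H_Z` (Zak-transform side). -/
def muZ : Measure (ℝ × ℝ) := muT.prod (volume.restrict (Set.Ioc 0 1))

/-- `L²(𝕋)`. -/
abbrev L2T : Type := MeasureTheory.Lp ℂ 2 muT

/-- The Hilbert space `H_Z ≃ L²(𝕋 × [0,1])`, the range of the Zak transform. -/
abbrev HZ : Type := MeasureTheory.Lp ℂ 2 muZ

/-- Quasi-periodicity characterizing membership of a function in `H_Z`:
`2π`-periodicity in the `ω`-coordinate and `H(z, x + n) = z^{-n} H(z, x)`,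
i.e. `H(ω, x + n) = e^{inω} H(ω, x)`. -/
def QP (H : ℝ × ℝ → ℂ) : Prop :=
  (∀ ω x : ℝ, H (ω + 2 * π, x) = H (ω, x)) ∧
    ∀ (ω x : ℝ) (n : ℤ),
      H (ω, x + (n : ℝ)) = Complex.exp (Complex.I * (n : ℂ) * (ω : ℂ)) * H (ω, x)

/-- `T = π_Z(m)`, multiplication by `m(z)` on `H_Z`. -/
def IsMulOp (m : ℝ → ℂ) (T : HZ →L[ℂ] HZ) : Prop :=
  ∀ H : HZ, ⇑(T H) =ᵐ[muZ] fun p : ℝ × ℝ => m p.1 * (⇑H) p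

/-- `Ut` is the unitary `Ũ` on `H_Z`:
`(ŨH)(z,x) = 2^{-1/2} (H(z², x/2) + z·H(z², (x+1)/2))`, characterized on quasi-periodic
representatives (`z = e^{-iω}`). -/
def IsUt (Ut : HZ ≃ₗᵢ[ℂ] HZ) : Prop :=
  ∀ H : ℝ × ℝ → ℂ, Measurable H → QP H →
    ∀ hH : MeasureTheory.MemLp H 2 muZ,
      ⇑(Ut (hH.toLp H)) =ᵐ[muZ] fun p : ℝ × ℝ =>
        ((Real.sqrt 2 : ℝ) : ℂ)⁻¹ *
          (H (2 * p.1, p.2 / 2) +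
            Complex.exp (-(Complex.I * (p.1 : ℂ))) * H (2 * p.1, (p.2 + 1) / 2))

/-- `S` is the operator `(Sf)(z) = m(z) f(z²)` on `L²(𝕋)`, characterized on
`2π`-periodic representatives. -/
def IsSOp (m : ℝ → ℂ) (S : L2T →L[ℂ] L2T) : Prop :=
  ∀ f : ℝ → ℂ, Measurable f → (∀ ω, f (ω + 2 * π) = f ω) →
    ∀ hf : MeasureTheory.MemLp f 2 muT,
      ⇑(S (hf.toLp f)) =ᵐ[muT] fun ω : ℝ => m ω * f (2 * ω)

/-! ### Auxiliary lemmas -/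

lemma two_pi_pos' : (0:ℝ) < 2 * π := by positivity

instance : IsFiniteMeasure muT := by
  constructor
  rw [muT, Measure.smul_apply, smul_eq_mul]
  refine ENNReal.mul_lt_top ?_ ?_
  · exact (ENNReal.inv_lt_top).2 (ENNReal.ofReal_pos.2 two_pi_pos')
  · rw [Measure.restrict_apply MeasurableSet.univ, Set.univ_inter, Real.volume_Ioc]
    exact ENNReal.ofReal_lt_top

lemma ae_muT_of_Ioo {P : ℝ → Prop} (h : ∀ ω ∈ Set.Ioo 0 (2*π), P ω) :
    ∀ᵐ ω ∂muT, P ω := by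
  rw [muT]
  refine Measure.ae_smul_measure ?_ _
  rw [← Measure.restrict_congr_set Ioo_ae_eq_Ioc]
  exact ae_restrict_of_forall_mem measurableSet_Ioo h

/-- Periodization of a function on the fundamental domain. -/
def per (a : ℝ → ℂ) (ω : ℝ) : ℂ := a (2 * π * Int.fract (ω / (2 * π)))

lemma per_measurable {a : ℝ → ℂ} (ha : Measurable a) : Measurable (per a) :=
  ha.comp (measurable_const.mul ((measurable_id.div_const _).fract))

lemma per_periodic (a : ℝ → ℂ) : ∀ ω, per a (ω + 2 * π) = per a ω := by
  intro ω
  have h2 : (ω + 2 * π) / (2 * π) = ω / (2 * π) + ((1:ℤ):ℝ) := by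
    push_cast; field_simp
  rw [per, per, h2, Int.fract_add_intCast]

lemma per_eq_on_Ioo {a : ℝ → ℂ} {ω : ℝ} (h : ω ∈ Set.Ioo 0 (2*π)) :
    per a ω = a ω := by
  have h1 : Int.fract (ω / (2 * π)) = ω / (2 * π) := by
    rw [Int.fract_eq_self]
    constructor
    · exact le_of_lt (div_pos h.1 two_pi_pos')
    · rw [div_lt_one two_pi_pos']; exact h.2
  rw [per, h1, mul_div_cancel₀ _ (ne_of_gt two_pi_pos')]

lemma per_ae_eq (a : ℝ → ℂ) : a =ᵐ[muT] per a :=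
  ae_muT_of_Ioo (fun ω hω => (per_eq_on_Ioo hω).symm)

/-- Theorem 4.7, first part: for `F ∈ H_Z` with `p₂(F) ∈ L^∞(𝕋)` and
`C_F : L²(𝕋) → H_Z` the bounded operator `C_F(α) = π_Z(α)F`, the following are equivalent:
(i) `M̃(F) = F`, where `M̃ = Ũ⁻¹ π_Z(m₀)`; (ii) `C_F S₀ = Ũ C_F`. -/
theorem scaling_eq_iff_intertwines
    (m₀ : ℝ → ℂ)
    (hm_meas : Measurable m₀) (hm_bdd : ∃ C, ∀ ω, ‖m₀ ω‖ ≤ C)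
    (hm_per : ∀ ω, m₀ (ω + 2 * π) = m₀ ω)
    (hm_quad : ∀ᵐ ω ∂(volume : Measure ℝ), ‖m₀ ω‖ ^ 2 + ‖m₀ (ω + π)‖ ^ 2 = 2)
    (F : ℝ × ℝ → ℂ) (hF_meas : Measurable F) (hF_qp : QP F)
    (hF_mem : MeasureTheory.MemLp F 2 muZ)
    (hF_p2_bdd : ∃ c : ℝ, ∀ᵐ ω ∂muT, (∫ x in Set.Ioc (0 : ℝ) 1, ‖F (ω, x)‖ ^ 2) ≤ c)
    (Ut : HZ ≃ₗᵢ[ℂ] HZ) (hUt : IsUt Ut)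
    (Tm : HZ →L[ℂ] HZ) (hTm : IsMulOp m₀ Tm)
    (S₀ : L2T →L[ℂ] L2T) (hS₀ : IsSOp m₀ S₀)
    (CF : L2T →L[ℂ] HZ)
    (hCF : ∀ (α : ℝ → ℂ), Measurable α → ∀ hα : MeasureTheory.MemLp α 2 muT,
      ⇑(CF (hα.toLp α)) =ᵐ[muZ] fun p : ℝ × ℝ => α p.1 * F p) :
    Ut.symm (Tm (hF_mem.toLp F)) = hF_mem.toLp F ↔
      ∀ α : L2T, CF (S₀ α) = Ut (CF α) := by
  set X := hF_mem.toLp F with hX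
  set G : ℝ × ℝ → ℂ := fun p =>
    ((Real.sqrt 2 : ℝ) : ℂ)⁻¹ *
      (F (2 * p.1, p.2 / 2) +
        Complex.exp (-(Complex.I * (p.1 : ℂ))) * F (2 * p.1, (p.2 + 1) / 2)) with hGdef
  have hUtF : ⇑(Ut X) =ᵐ[muZ] G := hUt F hF_meas hF_qp hF_mem
  have hXF : ⇑X =ᵐ[muZ] F := hF_mem.coeFn_toLp
  have hTmF : ⇑(Tm X) =ᵐ[muZ] fun p : ℝ × ℝ => m₀ p.1 * F p :=
    (hTm X).trans (hXF.mono fun p hp => by simp only [hp])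
  have key : Ut.symm (Tm X) = X ↔ Tm X = Ut X := by
    constructor
    · intro h; have := congrArg Ut h; simpa using this
    · intro h; rw [h, LinearIsometryEquiv.symm_apply_apply]
  rw [key]
  constructor
  · -- (i) ⇒ (ii)
    intro h α
    have hmF_eq_G : (fun p : ℝ × ℝ => m₀ p.1 * F p) =ᵐ[muZ] G := by
      refine hTmF.symm.trans ?_
      rw [h]; exact hUtF
    -- choose a periodic measurable representative of α
    set a0 : ℝ → ℂ := (Lp.aestronglyMeasurable α).mk α with ha0
    have ha0_meas : Measurable a0 :=
      (Lp.aestronglyMeasurable α).stronglyMeasurable_mk.measurable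
    set a : ℝ → ℂ := per a0 with ha
    have ha_meas : Measurable a := per_measurable ha0_meas
    have ha_per : ∀ ω, a (ω + 2 * π) = a ω := per_periodic a0
    have hα_eq : ⇑α =ᵐ[muT] a :=
      (Lp.aestronglyMeasurable α).ae_eq_mk.trans (per_ae_eq a0)
    have ha_mem : MemLp a 2 muT := (Lp.memLp α).ae_eq hα_eq
    have hα_toLp : α = ha_mem.toLp a :=
      Lp.ext (hα_eq.trans (ha_mem.coeFn_toLp).symm)
    -- representative of CF α
    set H₁ : ℝ × ℝ → ℂ := fun p => a p.1 * F p with hH₁def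
    have hH₁_meas : Measurable H₁ := (ha_meas.comp measurable_fst).mul hF_meas
    have hH₁_qp : QP H₁ := by
      constructor
      · intro ω x; simp only [hH₁def, ha_per, hF_qp.1]
      · intro ω x n; simp only [hH₁def]
        rw [hF_qp.2 ω x n]; ring
    have hCFα : ⇑(CF α) =ᵐ[muZ] H₁ := by
      rw [hα_toLp]; exact hCF a ha_meas ha_mem
    have hH₁_mem : MemLp H₁ 2 muZ := (Lp.memLp (CF α)).ae_eq hCFα
    have hCFα_toLp : CF α = hH₁_mem.toLp H₁ :=
      Lp.ext (hCFα.trans (hH₁_mem.coeFn_toLp).symm)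
    -- representative of Ut (CF α)
    have hUtCFα : ⇑(Ut (CF α)) =ᵐ[muZ] fun p : ℝ × ℝ =>
        ((Real.sqrt 2 : ℝ) : ℂ)⁻¹ *
          (H₁ (2 * p.1, p.2 / 2) +
            Complex.exp (-(Complex.I * (p.1 : ℂ))) * H₁ (2 * p.1, (p.2 + 1) / 2)) := by
      rw [hCFα_toLp]; exact hUt H₁ hH₁_meas hH₁_qp hH₁_mem
    have hUtCFα' : ⇑(Ut (CF α)) =ᵐ[muZ] fun p : ℝ × ℝ => a (2 * p.1) * G p := by
      refine hUtCFα.trans (Eventually.of_forall fun p => ?_)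
      simp only [hH₁def, hGdef]; ring
    -- representative of CF (S₀ α)
    set g : ℝ → ℂ := fun ω => m₀ ω * a (2 * ω) with hgdef
    have hg_meas : Measurable g := hm_meas.mul (ha_meas.comp (measurable_const_mul 2))
    have hS₀α : ⇑(S₀ α) =ᵐ[muT] g := by
      rw [hα_toLp]; exact hS₀ a ha_meas ha_per ha_mem
    have hg_mem : MemLp g 2 muT := (Lp.memLp (S₀ α)).ae_eq hS₀α
    have hS₀α_toLp : S₀ α = hg_mem.toLp g :=
      Lp.ext (hS₀α.trans (hg_mem.coeFn_toLp).symm)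
    have hCFS : ⇑(CF (S₀ α)) =ᵐ[muZ] fun p : ℝ × ℝ => g p.1 * F p := by
      rw [hS₀α_toLp]; exact hCF g hg_meas hg_mem
    -- conclude
    have hmid : (fun p : ℝ × ℝ => g p.1 * F p) =ᵐ[muZ] fun p : ℝ × ℝ => a (2 * p.1) * G p := by
      refine hmF_eq_G.mono fun p hp => ?_
      simp only [hgdef]
      rw [← hp]; ring
    exact Lp.ext (hCFS.trans (hmid.trans hUtCFα'.symm))
  · -- (ii) ⇒ (i)
    intro h
    -- apply (ii) with α = 1
    have hone_meas : Measurable (fun _ : ℝ => (1:ℂ)) := measurable_const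
    have hone_mem : MemLp (fun _ : ℝ => (1:ℂ)) 2 muT := memLp_const 1
    have hCF1 : ⇑(CF (hone_mem.toLp _)) =ᵐ[muZ] fun p : ℝ × ℝ => (1:ℂ) * F p :=
      hCF _ hone_meas hone_mem
    have hCF1' : CF (hone_mem.toLp _) = X := by
      refine Lp.ext (hCF1.trans ?_)
      exact hXF.symm.mono fun p hp => by simp [hp]
    have hS1 : ⇑(S₀ (hone_mem.toLp _)) =ᵐ[muT] fun ω => m₀ ω * (1:ℂ) :=
      hS₀ _ hone_meas (fun _ => rfl) hone_mem
    set m' : ℝ → ℂ := fun ω => m₀ ω * (1:ℂ) with hm'def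
    have hm'_meas : Measurable m' := hm_meas.mul measurable_const
    have hm'_mem : MemLp m' 2 muT := (Lp.memLp (S₀ (hone_mem.toLp _))).ae_eq hS1
    have hS1' : S₀ (hone_mem.toLp _) = hm'_mem.toLp m' :=
      Lp.ext (hS1.trans (hm'_mem.coeFn_toLp).symm)
    have h2 := h (hone_mem.toLp _)
    rw [hCF1', hS1'] at h2
    have hCFm' : ⇑(CF (hm'_mem.toLp m')) =ᵐ[muZ] fun p : ℝ × ℝ => m' p.1 * F p :=
      hCF m' hm'_meas hm'_mem
    refine Lp.ext (hTmF.trans ?_)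
    have : ⇑(Ut X) =ᵐ[muZ] fun p : ℝ × ℝ => m' p.1 * F p := by
      rw [← h2]; exact hCFm'
    refine this.symm.mono fun p hp => ?_
    simpa [hm'def] using hp

end
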